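/- For any real numbers s₁, s₂ and unit vectors n, m ∈ ℝ³ with |n| = |m| = 1, the squared Frobenius norm satisfies |s₁(n⊗n − (1/3)I) − s₂(m⊗m − (1/3)I)|² ≥ (1/6)|s₁ − s₂|². -/
import Mathlib


open Matrix

/-- Squared Frobenius norm of a 3×3 real matrix. -/
noncomputable def frobSq (A : Matrix (Fin 3) (Fin 3) ℝ) : ℝ := ∑ i, ∑ j, (A i j)^2

theorem uniaxial_Q_distance_lower_bound
    (s₁ s₂ : ℝ) (n m : Fin 3 → ℝ)
    (hn : ∑ i, (n i)^2 = 1) (hm : ∑ i, (m i)^2 = 1) :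
    frobSq (s₁ • (vecMulVec n n - (1/3 : ℝ) • (1 : Matrix (Fin 3) (Fin 3) ℝ))
          - s₂ • (vecMulVec m m - (1/3 : ℝ) • (1 : Matrix (Fin 3) (Fin 3) ℝ)))
      ≥ (1/6) * |s₁ - s₂|^2 := by
  simp only [Fin.sum_univ_three] at hn hm
  have key : ∀ x : ℝ, x^2 ≤ 1 → (1/6) * (s₁ - s₂)^2 ≤
      (2/3)*s₁^2 + (2/3)*s₂^2 - 2*s₁*s₂*x^2 + (2/3)*s₁*s₂ := by
    intro x hx
    rcases le_or_gt 0 (s₁ * s₂) with h | h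
    · nlinarith [sq_nonneg (s₁ - s₂), mul_nonneg h (sub_nonneg.mpr hx)]
    · nlinarith [sq_nonneg (s₁ + s₂), sq_nonneg x]
  have hcs : (n 0 * m 0 + n 1 * m 1 + n 2 * m 2)^2 ≤ 1 := by
    nlinarith [sq_nonneg (n 0 * m 1 - n 1 * m 0), sq_nonneg (n 0 * m 2 - n 2 * m 0),
      sq_nonneg (n 1 * m 2 - n 2 * m 1)]
  have h2 := key _ hcs
  rw [sq_abs]
  simp only [frobSq, Fin.sum_univ_three, Matrix.sub_apply, Matrix.smul_apply,
    Matrix.vecMulVec_apply, Matrix.one_apply, smul_eq_mul, Fin.ext_iff]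
  norm_num
  have hid : (s₁ * (n 0 * n 0 - 1 / 3) - s₂ * (m 0 * m 0 - 1 / 3)) ^ 2 + (s₁ * (n 0 * n 1) - s₂ * (m 0 * m 1)) ^ 2 +
          (s₁ * (n 0 * n 2) - s₂ * (m 0 * m 2)) ^ 2 +
        ((s₁ * (n 1 * n 0) - s₂ * (m 1 * m 0)) ^ 2 + (s₁ * (n 1 * n 1 - 1 / 3) - s₂ * (m 1 * m 1 - 1 / 3)) ^ 2 +
          (s₁ * (n 1 * n 2) - s₂ * (m 1 * m 2)) ^ 2) +
      ((s₁ * (n 2 * n 0) - s₂ * (m 2 * m 0)) ^ 2 + (s₁ * (n 2 * n 1) - s₂ * (m 2 * m 1)) ^ 2 +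
        (s₁ * (n 2 * n 2 - 1 / 3) - s₂ * (m 2 * m 2 - 1 / 3)) ^ 2)
      = (2/3)*s₁^2 + (2/3)*s₂^2 - 2*s₁*s₂*(n 0 * m 0 + n 1 * m 1 + n 2 * m 2)^2 + (2/3)*s₁*s₂ := by
    linear_combination (s₁^2*((n 0^2 + n 1^2 + n 2^2) + 1/3) + (2/3)*s₁*s₂) * hn
      + (s₂^2*((m 0^2 + m 1^2 + m 2^2) + 1/3) + (2/3)*s₁*s₂) * hm
  linarith [h2, hid]
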